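/- Let E be a finite-dimensional real inner product space, let φ : (Fin d → ℝ) → E be differentiable at ξ, and let L : E → ℝ be differentiable at p = φ ξ. Set ∂ i = fderiv ℝ φ ξ (Pi.single i 1) for i : Fin d, let G be the Gram matrix of the family ∂, let ∇L : Fin d → ℝ be the vector of coordinate derivatives (∇L) i = fderiv ℝ (L ∘ φ) ξ (Pi.single i 1), and let B be any generalized inverse of G. Then ∑ i, (B.mulVec ∇L) i • ∂ i equals the orthogonal projection of the gradient of L at p onto the subspace Submodule.span ℝ (Set.range ∂). -/

import Mathlib

open scoped RealInnerProductSpace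

theorem natural_parameter_gradient_pushforward_eq_projection_of_gradient
    {d : ℕ} {E : Type*} [NormedAddCommGroup E] [InnerProductSpace ℝ E]
    [FiniteDimensional ℝ E]
    (φ : (Fin d → ℝ) → E) (ξ : Fin d → ℝ) (hφ : DifferentiableAt ℝ φ ξ)
    (L : E → ℝ) (p : E) (hp : p = φ ξ) (hL : DifferentiableAt ℝ L p)
    (par : Fin d → E) (hpar : ∀ i, par i = fderiv ℝ φ ξ (Pi.single i 1))
    (G : Matrix (Fin d) (Fin d) ℝ) (hG : ∀ i j, G i j = ⟪par i, par j⟫)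
    (nablaL : Fin d → ℝ) (hnabla : ∀ i, nablaL i = fderiv ℝ (L ∘ φ) ξ (Pi.single i 1))
    (B : Matrix (Fin d) (Fin d) ℝ) (hB : G * B * G = G) :
    ∑ i, (B.mulVec nablaL) i • par i
      = (Submodule.orthogonalProjectionOnto (Submodule.span ℝ (Set.range par)) (gradient L p) : E) := by
  set g : E := gradient L p with hg
  set S := Submodule.span ℝ (Set.range par) with hS
  -- gradient pairing
  have hgrad : ∀ w : E, ⟪g, w⟫ = fderiv ℝ L p w := by
    intro w
    rw [hg, gradient, InnerProductSpace.toDual_symm_apply]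
  -- chain rule
  have hchain : ∀ i, nablaL i = ⟪g, par i⟫ := by
    intro i
    rw [hnabla, hpar, hgrad]
    have : fderiv ℝ (L ∘ φ) ξ = (fderiv ℝ L (φ ξ)).comp (fderiv ℝ φ ξ) :=
      fderiv_comp ξ (hp ▸ hL) hφ
    rw [this, ContinuousLinearMap.comp_apply, hp]
  -- proj g is a combination of par
  obtain ⟨c, hc⟩ := (Submodule.mem_span_range_iff_exists_fun ℝ).1
    (SetLike.coe_mem (S.orthogonalProjectionOnto g))
  -- inner of g with par j equals inner of proj with par j
  have hproj : ∀ j, ⟪(S.orthogonalProjectionOnto g : E), par j⟫ = ⟪g, par j⟫ := by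
    intro j
    have := Submodule.starProjection_inner_eq_zero (K := S) g (par j)
      (Submodule.subset_span (Set.mem_range_self j))
    rw [← Submodule.coe_orthogonalProjectionOnto_apply, inner_sub_left] at this
    linarith
  have hcG : nablaL = G.mulVec c := by
    funext j
    rw [hchain, ← hproj, ← hc, sum_inner]
    simp only [Matrix.mulVec, dotProduct, real_inner_smul_left]
    refine Finset.sum_congr rfl fun k _ => ?_
    rw [hG, real_inner_comm]; ring
  symm
  apply Submodule.eq_starProjection_of_mem_of_inner_eq_zero
  · exact Submodule.sum_mem _ fun i _ =>
      Submodule.smul_mem _ _ (Submodule.subset_span (Set.mem_range_self i))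
  · intro w hw
    induction hw using Submodule.span_induction with
    | mem x hx =>
      obtain ⟨j, rfl⟩ := hx
      rw [inner_sub_left]
      have h1 : ⟪∑ i, (B.mulVec nablaL) i • par i, par j⟫ = nablaL j := by
        rw [sum_inner]
        simp only [real_inner_smul_left]
        have h2 : ∑ i, B.mulVec nablaL i * ⟪par i, par j⟫
            = (G.mulVec (B.mulVec nablaL)) j := by
          simp only [Matrix.mulVec, dotProduct]
          refine Finset.sum_congr rfl fun k _ => ?_
          rw [hG, real_inner_comm]; ring
        rw [h2, hcG, Matrix.mulVec_mulVec, Matrix.mulVec_mulVec,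
          hB]
      rw [h1, hchain]
      ring
    | zero => simp
    | add x y _ _ hx hy => rw [inner_add_right, hx, hy]; ring
    | smul a x _ hx => rw [inner_smul_right, hx]; ring
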